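/- Let P be the probability measure on ℕ with P({n}) = 1/2^n. For every integer n ≥ 4, the n-th quantization error equals 2^{3−n}/3, and an optimal set of n-means is {1, 2, …, n−2, Av[n−1,n], Av[n+1,∞)}, where Av[n−1,n] = E(X | X∈{n−1,n}) = n − 2/3 and Av[n+1,∞) = E(X | X ≥ n+1) = n + 2. -/

import Mathlib

/-- Distortion error of a nonempty finite set α for the measure P({n}) = 1/2^n, n ≥ 1. -/
noncomputable def errG (α : Finset ℝ) (h : α.Nonempty) : ℝ :=
  ∑' n : ℕ, (1/2^(n+1) : ℝ) * α.inf' h (fun a => ((n+1 : ℝ) - a)^2)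

/-- Conditional expectation E(X | X ∈ {k,…,l}). -/
noncomputable def avG (k l : ℕ) : ℝ :=
  (∑ j ∈ Finset.Icc k l, (j : ℝ)/2^j) / (∑ j ∈ Finset.Icc k l, (1 : ℝ)/2^j)

/-- Conditional expectation E(X | X ≥ k). -/
noncomputable def avGTail (k : ℕ) : ℝ :=
  (∑' n : ℕ, ((n+k : ℝ))/2^(n+k)) / (∑' n : ℕ, (1 : ℝ)/2^(n+k))

open Finset

lemma hsG0 : HasSum (fun n : ℕ => ((1:ℝ)/2)^n) 2 := by
  have h := hasSum_geometric_of_lt_one (by norm_num : (0:ℝ) ≤ 1/2) (by norm_num)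
  convert h using 1; norm_num

lemma hsG1 : HasSum (fun n : ℕ => (n:ℝ) * (1/2)^n) 2 := by
  have h := hasSum_coe_mul_geometric_of_norm_lt_one (r := (1/2:ℝ)) (by norm_num)
  convert h using 1
  · rfl
  · norm_num

lemma hsG2 : HasSum (fun n : ℕ => (n:ℝ)^2 * (1/2)^n) 6 := by
  have A := hasSum_choose_mul_geometric_of_norm_lt_one (𝕜 := ℝ) 2 (r := (1/2:ℝ)) (by norm_num)
  have B := (hsG1.mul_left 3).add (hsG0.mul_left 2)
  have C := (A.mul_left 2).sub B
  convert C using 1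
  · rfl
  · funext n
    rw [Nat.cast_choose_two]
    push_cast
    ring
  · norm_num

lemma hasSum_err_single (a : ℝ) :
    HasSum (fun n : ℕ => (1/2^(n+1) : ℝ) * ((n+1 : ℝ) - a)^2) (2 + (a-2)^2) := by
  have C := ((hsG2.mul_left (1/2)).add (hsG1.mul_left (1-a))).add (hsG0.mul_left ((1-a)^2/2))
  convert C using 1
  · rfl
  · funext n
    have : (1:ℝ)/2^(n+1) = (1/2) * (1/2)^n := by rw [pow_succ, div_pow, one_pow]; ring
    rw [this]
    ring
  · ring

/-- finite geometric sums -/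
lemma fs0 (k : ℕ) : ∑ j ∈ range k, (1/2^(j+1) : ℝ) = 1 - 1/2^k := by
  induction k with
  | zero => simp
  | succ k ih =>
    rw [Finset.sum_range_succ, ih]
    simp only [pow_succ]
    have : (2:ℝ)^k ≠ 0 := by positivity
    field_simp
    ring

lemma fs1 (k : ℕ) : ∑ j ∈ range k, (1/2^(j+1) : ℝ) * (j+1) = 2 - ((k:ℝ)+2)/2^k := by
  induction k with
  | zero => simp
  | succ k ih =>
    rw [Finset.sum_range_succ, ih]
    simp only [pow_succ]
    have : (2:ℝ)^k ≠ 0 := by positivity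
    push_cast
    field_simp
    ring

lemma fs2 (k : ℕ) : ∑ j ∈ range k, (1/2^(j+1) : ℝ) * ((j:ℝ)+1)^2
    = 6 - ((k:ℝ)^2+4*k+6)/2^k := by
  induction k with
  | zero => simp
  | succ k ih =>
    rw [Finset.sum_range_succ, ih]
    simp only [pow_succ]
    have : (2:ℝ)^k ≠ 0 := by positivity
    push_cast
    field_simp
    ring

-- 6(k+2)+3 ≤ 4·2^(k+2)
lemma lemA : ∀ k : ℕ, 6*(k+2) + 3 ≤ 4*2^(k+2) := by
  intro k
  induction k with
  | zero => norm_num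
  | succ k ih =>
    have h1 : 1 ≤ 2^(k+2) := Nat.one_le_two_pow
    have hp : 2^(k+1+2) = 2*2^(k+2) := by ring
    omega

-- 3k²+4 ≤ 4·2^k for k ≥ 1
lemma N1 : ∀ k : ℕ, 3*(k+1)^2 + 4 ≤ 4*2^(k+1) := by
  intro k
  match k with
  | 0 => norm_num
  | 1 => norm_num
  | (k+2) =>
    induction k with
    | zero => norm_num
    | succ k ih =>
      have h1 := lemA (k+1)
      have h3 : 3*(k+1+2+1)^2 = 3*(k+2+1)^2 + (6*(k+1+2)+3) := by ring
      have hp : 2^(k+1+2+1) = 2*2^(k+2+1) := by ring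
      have hp2 : 2^(k+1+2) ≤ 2^(k+2+1) := by
        apply Nat.pow_le_pow_right <;> omega
      omega

-- (12k+6)·2^k + 4 ≤ 10·4^k for k ≥ 1, real version
lemma A1R : ∀ k : ℕ, ((12*((k:ℝ)+1)+6))*2^(k+1) + 4 ≤ 10*4^(k+1) := by
  intro k
  induction k with
  | zero => norm_num
  | succ k ih =>
    have h2 : (2:ℝ) ≤ 2^(k+1) := by
      calc (2:ℝ) = 2^1 := by norm_num
        _ ≤ 2^(k+1) := by apply pow_le_pow_right₀ (by norm_num); omega
    have h4 : (4:ℝ)^(k+1) = 2^(k+1) * 2^(k+1) := by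
      rw [show (4:ℝ) = 2*2 by norm_num, mul_pow]
    have e1 : ((k:ℝ)+1+1) = ((k:ℝ)+1) + 1 := by ring
    have hp2 : (2:ℝ)^(k+1+1) = 2*2^(k+1) := by ring
    have hp4 : (4:ℝ)^(k+1+1) = 4*4^(k+1) := by ring
    push_cast
    push_cast at ih
    nlinarith [ih, h2, h4]

-- (3k²+9)·2^k ≤ 5·4^k + 4 for k ≥ 1, real version
lemma N2R : ∀ k : ℕ, (3*((k:ℝ)+1)^2+9)*2^(k+1) ≤ 5*4^(k+1) + 4 := by
  intro k
  induction k with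
  | zero => norm_num
  | succ k ih =>
    have hA1 := A1R k
    have hp2 : (2:ℝ)^(k+1+1) = 2*2^(k+1) := by ring
    have hp4 : (4:ℝ)^(k+1+1) = 4*4^(k+1) := by ring
    push_cast
    push_cast at ih hA1
    nlinarith [ih, hA1]

lemma keyPoly1 (K x a : ℝ) (hx : 0 < x) (hx2 : x ≤ 1/2) (hN : (3*K^2+4)*x ≤ 4) :
    2/3 ≤ (6 - (K^2+4*K+6)*x) - 2*(2-(K+2)*x)*a + (1-x)*a^2 + x*2 := by
  have hA : (0:ℝ) < 1 - x := by linarith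
  have hsq := sq_nonneg ((1-x)*a - (2-(K+2)*x))
  have id1 : (1-x)*(((6 - (K^2+4*K+6)*x) - 2*(2-(K+2)*x)*a + (1-x)*a^2 + x*2) - 2/3)
      = ((1-x)*a - (2-(K+2)*x))^2 + (4 - (3*K^2+4)*x)/3 := by ring
  nlinarith [id1, hsq, hA, hN]

lemma keyPoly2 (K x y a : ℝ) (hx : 0 < x) (hx2 : x ≤ 1/2) (hy : 0 < y) (hy8 : y ≤ 1/8)
    (hN : (3*K^2+9)*x ≤ 5 + 4*x^2) :
    8/3*y ≤ (6 - (K^2+4*K+6)*x) - 2*(2-(K+2)*x)*a + (1-x)*a^2 + x*(16/3*y) := by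
  have hA : (0:ℝ) < 1 - x := by linarith
  have hsq := sq_nonneg ((1-x)*a - (2-(K+2)*x))
  have hprod : (0:ℝ) ≤ (1/8 - y) * ((1-x)*(1-2*x)) := by
    apply mul_nonneg (by linarith)
    apply mul_nonneg (by linarith) (by linarith)
  have id2 : (1-x)*(((6 - (K^2+4*K+6)*x) - 2*(2-(K+2)*x)*a + (1-x)*a^2 + x*(16/3*y)) - 8/3*y)
      = ((1-x)*a - (2-(K+2)*x))^2 + (5 - (3*K^2+9)*x + 4*x^2)/3
        + (8/3)*((1/8 - y)*((1-x)*(1-2*x))) := by ring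
  nlinarith [id2, hsq, hA, hN, hprod]

noncomputable def Bd : ℕ → ℝ := fun m => if m ≤ 1 then 2 else 8/3*(1/2)^m
lemma Bd_succ_le (m : ℕ) : Bd (m+1) ≤ Bd m := by
  unfold Bd
  rcases Nat.lt_or_ge m 2 with h | h
  · interval_cases m <;> norm_num
  · rw [if_neg (by omega), if_neg (by omega)]
    have : (0:ℝ) < (1/2:ℝ)^m := by positivity
    rw [pow_succ]
    nlinarith

lemma keyIneq (k m : ℕ) (hk : 1 ≤ k) (hm : 1 ≤ m) (a : ℝ) :
    Bd (m+1) ≤ (6 - ((k:ℝ)^2+4*k+6)/2^k) - 2*a*(2 - ((k:ℝ)+2)/2^k) + a^2*(1 - 1/2^k)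
      + (1/2^k)*(Bd m) := by
  have hxe : (1:ℝ)/2^k = (1/2:ℝ)^k := by rw [div_pow, one_pow]
  have hx : (0:ℝ) < (1/2:ℝ)^k := by positivity
  have hx2 : (1/2:ℝ)^k ≤ 1/2 := by
    calc (1/2:ℝ)^k ≤ (1/2:ℝ)^1 := by
          apply pow_le_pow_of_le_one (by norm_num) (by norm_num) hk
      _ = 1/2 := by norm_num
  have hxk : (2:ℝ)^k * (1/2:ℝ)^k = 1 := by
    rw [div_pow, one_pow]; field_simp
  have e1 : ((k:ℝ)^2+4*k+6)/2^k = ((k:ℝ)^2+4*k+6)*(1/2:ℝ)^k := by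
    rw [div_eq_mul_one_div, hxe]
  have e2 : ((k:ℝ)+2)/2^k = ((k:ℝ)+2)*(1/2:ℝ)^k := by
    rw [div_eq_mul_one_div, hxe]
  rw [e1, e2, hxe]
  obtain ⟨k', rfl⟩ : ∃ k', k = k'+1 := ⟨k-1, by omega⟩
  have hcast : ((k'+1 : ℕ) : ℝ) = (k':ℝ)+1 := by push_cast; ring
  rw [hcast]
  rcases Nat.lt_or_ge m 2 with h2 | h2
  · -- m = 1
    have hm1 : m = 1 := by omega
    subst hm1
    have hN : (3:ℝ)*((k':ℝ)+1)^2 + 4 ≤ 4*(2:ℝ)^(k'+1) := by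
      have := N1 k'
      have h' : ((3*(k'+1)^2 + 4 : ℕ) : ℝ) ≤ ((4*2^(k'+1) : ℕ) : ℝ) := by exact_mod_cast this
      push_cast at h'
      linarith
    have hNx : (3*((k':ℝ)+1)^2+4)*(1/2:ℝ)^(k'+1) ≤ 4 := by
      have h' := mul_le_mul_of_nonneg_right hN (le_of_lt hx)
      calc (3*((k':ℝ)+1)^2+4)*(1/2:ℝ)^(k'+1) ≤ (4*(2:ℝ)^(k'+1))*(1/2:ℝ)^(k'+1) := h'
        _ = 4*((2:ℝ)^(k'+1)*(1/2:ℝ)^(k'+1)) := by ring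
        _ = 4 := by rw [hxk]; ring
    have hBd1 : Bd 1 = 2 := by norm_num [Bd]
    have hBd2 : Bd 2 = 2/3 := by norm_num [Bd]
    rw [hBd1, hBd2]
    have := keyPoly1 ((k':ℝ)+1) ((1/2:ℝ)^(k'+1)) a hx hx2 hNx
    nlinarith [this]
  · -- m ≥ 2
    have hy : (0:ℝ) < (1/2:ℝ)^(m+1) := by positivity
    have hy8 : (1/2:ℝ)^(m+1) ≤ 1/8 := by
      calc (1/2:ℝ)^(m+1) ≤ (1/2:ℝ)^3 := by
            apply pow_le_pow_of_le_one (by norm_num) (by norm_num) (by omega)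
        _ = 1/8 := by norm_num
    have hBdm : Bd m = 16/3*(1/2:ℝ)^(m+1) := by
      rw [Bd]
      rw [if_neg (by omega), pow_succ]
      ring
    have hBdm1 : Bd (m+1) = 8/3*(1/2:ℝ)^(m+1) := by
      rw [Bd]
      rw [if_neg (by omega)]
    have h4x : (4:ℝ)^(k'+1) * ((1/2:ℝ)^(k'+1))^2 = 1 := by
      have h44 : (4:ℝ)^(k'+1) = 2^(k'+1) * 2^(k'+1) := by
        rw [show (4:ℝ) = 2*2 by norm_num, mul_pow]
      rw [h44]
      calc 2^(k'+1) * 2^(k'+1) * ((1/2:ℝ)^(k'+1))^2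
          = ((2:ℝ)^(k'+1)*(1/2:ℝ)^(k'+1)) * ((2:ℝ)^(k'+1)*(1/2:ℝ)^(k'+1)) := by ring
        _ = 1 := by rw [hxk]; ring
    have hNx : (3*((k':ℝ)+1)^2+9)*(1/2:ℝ)^(k'+1) ≤ 5 + 4*((1/2:ℝ)^(k'+1))^2 := by
      have hN := N2R k'
      have h' := mul_le_mul_of_nonneg_right hN
        (le_of_lt (mul_pos hx hx) : (0:ℝ) ≤ (1/2:ℝ)^(k'+1) * (1/2:ℝ)^(k'+1))
      have l1 : (3*((k':ℝ)+1)^2+9)*2^(k'+1) * ((1/2:ℝ)^(k'+1) * (1/2:ℝ)^(k'+1))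
          = (3*((k':ℝ)+1)^2+9)*(1/2:ℝ)^(k'+1) := by
        calc (3*((k':ℝ)+1)^2+9)*2^(k'+1) * ((1/2:ℝ)^(k'+1) * (1/2:ℝ)^(k'+1))
            = (3*((k':ℝ)+1)^2+9)*(1/2:ℝ)^(k'+1) * ((2:ℝ)^(k'+1)*(1/2:ℝ)^(k'+1)) := by ring
          _ = (3*((k':ℝ)+1)^2+9)*(1/2:ℝ)^(k'+1) := by rw [hxk]; ring
      have l2 : (5*(4:ℝ)^(k'+1) + 4) * ((1/2:ℝ)^(k'+1) * (1/2:ℝ)^(k'+1))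
          = 5 + 4*((1/2:ℝ)^(k'+1))^2 := by
        calc (5*(4:ℝ)^(k'+1) + 4) * ((1/2:ℝ)^(k'+1) * (1/2:ℝ)^(k'+1))
            = 5*((4:ℝ)^(k'+1)*((1/2:ℝ)^(k'+1))^2) + 4*((1/2:ℝ)^(k'+1))^2 := by ring
          _ = 5 + 4*((1/2:ℝ)^(k'+1))^2 := by rw [h4x]; ring
      rw [l1, l2] at h'
      exact h'
    rw [hBdm, hBdm1]
    have := keyPoly2 ((k':ℝ)+1) ((1/2:ℝ)^(k'+1)) ((1/2:ℝ)^(m+1)) a hx hx2 hy hy8 hNx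
    nlinarith [this]

lemma inf'_nonneg (α : Finset ℝ) (h : α.Nonempty) (J : ℝ) :
    0 ≤ α.inf' h (fun a => (J - a)^2) := by
  apply Finset.le_inf' h
  intro b _
  exact sq_nonneg _

lemma errG_summable (α : Finset ℝ) (h : α.Nonempty) :
    Summable (fun n : ℕ => (1/2^(n+1) : ℝ) * α.inf' h (fun a => ((n+1 : ℝ) - a)^2)) := by
  obtain ⟨a0, ha0⟩ := h
  refine Summable.of_nonneg_of_le (fun n => ?_) (fun n => ?_) (hasSum_err_single a0).summable
  · exact mul_nonneg (by positivity) (inf'_nonneg α _ _)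
  · exact mul_le_mul_of_nonneg_left (Finset.inf'_le _ ha0) (by positivity)

lemma errG_singleton (a : ℝ) (h : ({a} : Finset ℝ).Nonempty) :
    errG {a} h = 2 + (a-2)^2 := by
  unfold errG
  simp only [Finset.inf'_singleton]
  exact (hasSum_err_single a).tsum_eq

lemma errG_two_le (a : ℝ) (h : ({a} : Finset ℝ).Nonempty) : 2 ≤ errG {a} h := by
  rw [errG_singleton]
  nlinarith [sq_nonneg (a-2)]

lemma main_lb : ∀ m : ℕ, ∀ (α : Finset ℝ) (h : α.Nonempty), α.card ≤ m + 1 → Bd (m+1) ≤ errG α h := by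
  intro m
  induction m with
  | zero =>
    intro α h hcard
    have hc1 : α.card = 1 := le_antisymm hcard (Finset.one_le_card.2 h)
    obtain ⟨a, rfl⟩ := Finset.card_eq_one.1 hc1
    have : Bd 1 = 2 := by norm_num [Bd]
    rw [this]
    exact errG_two_le a h
  | succ m ih =>
    intro α h hcard
    rcases Nat.lt_or_ge α.card (m+2) with hc | hc
    · exact le_trans (Bd_succ_le (m+1)) (ih α h (by omega))
    have hcm : α.card = m + 2 := by omega
    set a0 := α.min' h with ha0def
    have ha0 : a0 ∈ α := Finset.min'_mem α h
    set β := α.erase a0 with hβdef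
    have hβc : β.card = m + 1 := by rw [hβdef, Finset.card_erase_of_mem ha0, hcm]; omega
    have hβ : β.Nonempty := Finset.card_pos.1 (by omega)
    set b1 := β.min' hβ with hb1def
    have hb1 : b1 ∈ β := Finset.min'_mem β hβ
    have ha0b1 : a0 ≤ b1 := Finset.min'_le α b1 (Finset.mem_of_mem_erase hb1)
    set τ : ℝ := (a0 + b1)/2 with hτdef
    set k : ℕ := if τ ≤ 1 then 0 else ⌈τ⌉₊ - 1 with hkdef
    have hk1 : ∀ j : ℕ, j < k → ((j:ℝ)+1) < τ := by
      intro j hj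
      rw [hkdef] at hj
      split at hj
      · omega
      · rename_i hτ1
        push_neg at hτ1
        have hτ0 : 0 ≤ τ := by linarith
        have hc2 : 1 < ⌈τ⌉₊ := Nat.lt_ceil.2 (by exact_mod_cast hτ1)
        have hju : j + 1 ≤ ⌈τ⌉₊ - 1 := hj
        have hcast : ((j:ℝ)+1) ≤ ((⌈τ⌉₊ : ℕ) : ℝ) - 1 := by
          have : (j:ℕ) + 1 + 1 ≤ ⌈τ⌉₊ := by omega
          have := Nat.cast_le (α := ℝ) |>.2 this
          push_cast at this
          linarith
        have := Nat.ceil_lt_add_one hτ0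
        linarith
    have hk2 : τ ≤ (k:ℝ)+1 := by
      rw [hkdef]
      split
      · rename_i hτ1; push_cast; linarith
      · rename_i hτ1
        push_neg at hτ1
        have hc2 : 1 < ⌈τ⌉₊ := Nat.lt_ceil.2 (by exact_mod_cast hτ1)
        rw [Nat.cast_sub (by omega : 1 ≤ ⌈τ⌉₊)]
        push_cast
        linarith [Nat.le_ceil τ]
    -- part 1 : finite block
    have part1 : ∑ j ∈ range k, (1/2^(j+1) : ℝ) * ((j+1 : ℝ) - a0)^2
        ≤ ∑ j ∈ range k, (1/2^(j+1) : ℝ) * α.inf' h (fun a => ((j+1 : ℝ) - a)^2) := by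
      apply Finset.sum_le_sum
      intro j hj
      apply mul_le_mul_of_nonneg_left _ (by positivity)
      apply Finset.le_inf' h
      intro b hb
      have hab : a0 ≤ b := Finset.min'_le α b hb
      rcases eq_or_ne b a0 with rfl | hne
      · exact le_rfl
      · have hbβ : b ∈ β := Finset.mem_erase.2 ⟨hne, hb⟩
        have hb1b : b1 ≤ b := Finset.min'_le β b hbβ
        have hjτ : ((j:ℝ)+1) < τ := hk1 j (Finset.mem_range.1 hj)
        rw [hτdef] at hjτ
        nlinarith [hjτ, ha0b1, hb1b]
    -- part 2 : tail
    have hinj : Function.Injective (fun b : ℝ => b - (k:ℝ)) := fun x y hxy => by simpa using hxy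
    set γ : Finset ℝ := β.image (fun b => b - (k:ℝ)) with hγdef
    have hγ : γ.Nonempty := hβ.image _
    have hγc : γ.card = m + 1 := by
      rw [hγdef, Finset.card_image_of_injective _ hinj, hβc]
    have hih := ih γ hγ (le_of_eq hγc)
    have hinf : ∀ j : ℕ, γ.inf' hγ (fun a => ((j+1 : ℝ) - a)^2)
        ≤ α.inf' h (fun a => ((↑(j+k) + 1 : ℝ) - a)^2) := by
      intro j
      have hcomp := Finset.inf'_comp_eq_image (s := β) (f := fun b => b - (k:ℝ)) hβ
        (fun a => ((j+1 : ℝ) - a)^2)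
      have e0 : γ.inf' hγ (fun a => ((j+1 : ℝ) - a)^2)
          = β.inf' hβ ((fun a => ((j+1 : ℝ) - a)^2) ∘ (fun b => b - (k:ℝ))) := hcomp.symm
      have hγβ : γ.inf' hγ (fun a => ((j+1 : ℝ) - a)^2)
          = β.inf' hβ (fun b => ((↑(j+k) + 1 : ℝ) - b)^2) := by
        rw [e0]
        refine Finset.inf'_congr hβ rfl fun b _ => ?_
        simp only [Function.comp]
        push_cast
        ring
      rw [hγβ]
      apply Finset.le_inf' h
      intro b hb
      by_cases hba : b = a0
      · rw [hba]
        calc β.inf' hβ (fun b => ((↑(j+k) + 1 : ℝ) - b)^2) ≤ ((↑(j+k) + 1 : ℝ) - b1)^2 :=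
              Finset.inf'_le _ hb1
          _ ≤ ((↑(j+k) + 1 : ℝ) - a0)^2 := by
              have hJ : τ ≤ (↑(j+k) + 1 : ℝ) := by
                have : ((k:ℝ)) ≤ ((j+k : ℕ) : ℝ) := by push_cast; linarith [Nat.cast_nonneg (α := ℝ) j]
                linarith [hk2]
              rw [hτdef] at hJ
              nlinarith [hJ, ha0b1]
      · exact Finset.inf'_le _ (Finset.mem_erase.2 ⟨hba, hb⟩)
    have part2 : (1/2^k : ℝ) * errG γ hγ
        ≤ ∑' j : ℕ, (1/2^((j+k)+1) : ℝ) * α.inf' h (fun a => ((↑(j+k) + 1 : ℝ) - a)^2) := by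
      unfold errG
      rw [← tsum_mul_left]
      apply Summable.tsum_le_tsum _ ((errG_summable γ hγ).mul_left _)
        ((summable_nat_add_iff k).2 (errG_summable α h))
      intro j
      have hpow : (1/2^((j+k)+1) : ℝ) = (1/2^k) * (1/2^(j+1)) := by
        rw [show (j+k)+1 = k + (j+1) by omega, pow_add]
        ring
      rw [hpow, mul_assoc]
      exact mul_le_mul_of_nonneg_left (mul_le_mul_of_nonneg_left (hinf j) (by positivity))
        (by positivity)
    -- closed form of the head sum
    have hS1 : ∑ j ∈ range k, (1/2^(j+1) : ℝ)*((j+1 : ℝ)-a0)^2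
        = (6 - ((k:ℝ)^2+4*k+6)/2^k) - 2*a0*(2 - ((k:ℝ)+2)/2^k) + a0^2*(1 - 1/2^k) := by
      have hcg : ∀ j ∈ range k, (1/2^(j+1) : ℝ)*((j+1 : ℝ)-a0)^2
          = ((1/2^(j+1))*((j:ℝ)+1)^2 - 2*a0*((1/2^(j+1))*((j:ℝ)+1))) + a0^2*(1/2^(j+1)) := by
        intro j _
        ring
      rw [Finset.sum_congr rfl hcg, Finset.sum_add_distrib, Finset.sum_sub_distrib,
        ← Finset.mul_sum, ← Finset.mul_sum, fs0, fs1, fs2]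
    -- decomposition
    have hdec := (errG_summable α h).sum_add_tsum_nat_add k
    have hfinal : Bd (m+1+1) ≤ (6 - ((k:ℝ)^2+4*k+6)/2^k) - 2*a0*(2 - ((k:ℝ)+2)/2^k)
        + a0^2*(1 - 1/2^k) + (1/2^k)*(Bd (m+1)) := by
      rcases Nat.eq_zero_or_pos k with hk0 | hkpos
      · rw [hk0]
        push_cast
        norm_num
        exact Bd_succ_le (m+1)
      · exact keyIneq k (m+1) hkpos (by omega) a0
    have hmono : (1/2^k : ℝ) * Bd (m+1) ≤ (1/2^k : ℝ) * errG γ hγ :=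
      mul_le_mul_of_nonneg_left hih (by positivity)
    calc Bd (m+1+1) ≤ (6 - ((k:ℝ)^2+4*k+6)/2^k) - 2*a0*(2 - ((k:ℝ)+2)/2^k)
          + a0^2*(1 - 1/2^k) + (1/2^k)*(Bd (m+1)) := hfinal
      _ ≤ (∑ j ∈ range k, (1/2^(j+1) : ℝ)*((j+1 : ℝ)-a0)^2) + (1/2^k)*(errG γ hγ) := by
          rw [hS1]
          linarith [hmono]
      _ ≤ (∑ j ∈ range k, (1/2^(j+1) : ℝ) * α.inf' h (fun a => ((j+1 : ℝ) - a)^2))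
          + ∑' j : ℕ, (1/2^((j+k)+1) : ℝ) * α.inf' h (fun a => ((↑(j+k) + 1 : ℝ) - a)^2) := by
          exact add_le_add part1 part2
      _ = errG α h := by rw [errG]; exact hdec

lemma avG_eq (n : ℕ) (hn : 4 ≤ n) : avG (n-1) n = (n : ℝ) - 2/3 := by
  obtain ⟨m, rfl⟩ : ∃ m, n = m + 4 := ⟨n - 4, by omega⟩
  have h1 : m + 4 - 1 = m + 3 := by omega
  rw [avG, h1]
  have h2 : Finset.Icc (m+3) (m+4) = {m+3, m+4} := by
    ext x
    simp only [Finset.mem_Icc, Finset.mem_insert, Finset.mem_singleton]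
    omega
  rw [h2]
  have hne : (m+3 : ℕ) ≠ (m+4 : ℕ) := by omega
  rw [Finset.sum_pair hne, Finset.sum_pair hne]
  have hP : ((2:ℝ)^(m+3)) ≠ 0 := by positivity
  have hP4 : ((2:ℝ)^(m+4)) ≠ 0 := by positivity
  have hden : (1:ℝ)/2^(m+3) + 1/2^(m+4) ≠ 0 := by positivity
  rw [div_eq_iff hden]
  push_cast
  rw [show (m:ℕ)+4 = (m+3)+1 by omega]
  simp only [pow_succ]
  push_cast
  field_simp
  ring

lemma avGTail_eq (K : ℕ) (hK : 1 ≤ K) : avGTail K = (K : ℝ) + 1 := by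
  have hPK : ((2:ℝ)^K) ≠ 0 := by positivity
  have hnum : HasSum (fun i : ℕ => ((i + K : ℝ))/2^(i+K)) ((2 + 2*(K:ℝ))*(1/2^K)) := by
    have h := (hsG1.add (hsG0.mul_left (K:ℝ))).mul_left ((1:ℝ)/2^K)
    have hfun : (fun i : ℕ => ((1:ℝ)/2^K) * ((i:ℝ)*(1/2)^i + (K:ℝ)*(1/2)^i))
        = (fun i : ℕ => ((i + K : ℝ))/2^(i+K)) := by
      funext i
      rw [pow_add]
      have hi : ((1:ℝ)/2)^i = 1/2^i := by rw [div_pow, one_pow]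
      rw [hi]
      have hPi : ((2:ℝ)^i) ≠ 0 := by positivity
      field_simp
    rw [hfun] at h
    have hv : (2 + 2*(K:ℝ))*(1/2^K) = 1/2^K * (2 + (K:ℝ)*2) := by ring
    rw [hv]
    exact h
  have hden : HasSum (fun i : ℕ => (1 : ℝ)/2^(i+K)) (2*(1/2^K)) := by
    have h := hsG0.mul_left ((1:ℝ)/2^K)
    have hfun : (fun i : ℕ => ((1:ℝ)/2^K) * ((1:ℝ)/2)^i) = (fun i : ℕ => (1:ℝ)/2^(i+K)) := by
      funext i
      rw [pow_add]
      have hi : ((1:ℝ)/2)^i = 1/2^i := by rw [div_pow, one_pow]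
      rw [hi]
      have hPi : ((2:ℝ)^i) ≠ 0 := by positivity
      field_simp
    rw [hfun] at h
    have hv : (2:ℝ)*(1/2^K) = 1/2^K * 2 := by ring
    rw [hv]
    exact h
  rw [avGTail, hnum.tsum_eq, hden.tsum_eq]
  field_simp
  ring

lemma errG_gamma (m : ℕ) :
    ∀ (h : ((Finset.Icc 1 (m+2)).image (fun j : ℕ => (j : ℝ))
        ∪ {((m:ℝ)+4) - 2/3, ((m:ℝ)+4) + 2}).Nonempty),
    errG _ h = 8/3*(1/2)^(m+4) := by
  intro h
  set γ : Finset ℝ := (Finset.Icc 1 (m+2)).image (fun j : ℕ => (j : ℝ))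
      ∪ {((m:ℝ)+4) - 2/3, ((m:ℝ)+4) + 2} with hγdef
  have hmem : ∀ a ∈ γ, (∃ i : ℕ, 1 ≤ i ∧ i ≤ m+2 ∧ a = (i:ℝ))
      ∨ a = ((m:ℝ)+4) - 2/3 ∨ a = ((m:ℝ)+4) + 2 := by
    intro a ha
    rcases Finset.mem_union.1 ha with hu | hu
    · obtain ⟨i, hi, rfl⟩ := Finset.mem_image.1 hu
      have := Finset.mem_Icc.1 hi
      exact Or.inl ⟨i, this.1, this.2, rfl⟩
    · rcases Finset.mem_insert.1 hu with hv | hv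
      · exact Or.inr (Or.inl hv)
      · exact Or.inr (Or.inr (Finset.mem_singleton.1 hv))
  have hc1 : ((m:ℝ)+4) - 2/3 ∈ γ := by
    apply Finset.mem_union_right
    exact Finset.mem_insert_self _ _
  have hc2 : ((m:ℝ)+4) + 2 ∈ γ := by
    apply Finset.mem_union_right
    exact Finset.mem_insert_of_mem (Finset.mem_singleton_self _)
  -- inf' evaluations
  have ev1 : ∀ j : ℕ, j ≤ m+1 → γ.inf' h (fun a => ((j+1 : ℝ) - a)^2) = 0 := by
    intro j hj
    refine le_antisymm ?_ (inf'_nonneg γ h _)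
    have hjm : ((j+1 : ℕ) : ℝ) ∈ γ := by
      apply Finset.mem_union_left
      exact Finset.mem_image_of_mem _ (Finset.mem_Icc.2 ⟨by omega, by omega⟩)
    calc γ.inf' h (fun a => ((j+1 : ℝ) - a)^2) ≤ ((j+1 : ℝ) - ((j+1 : ℕ) : ℝ))^2 :=
          Finset.inf'_le _ hjm
      _ = 0 := by push_cast; ring
  have ev2 : γ.inf' h (fun a => (((m+2:ℕ):ℝ)+1 - a)^2) = 1/9 := by
    refine le_antisymm ?_ ?_
    · calc γ.inf' h _ ≤ (((m+2:ℕ):ℝ)+1 - (((m:ℝ)+4) - 2/3))^2 := Finset.inf'_le _ hc1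
        _ = 1/9 := by push_cast; ring_nf
    · apply Finset.le_inf' h
      intro b hb
      rcases hmem b hb with ⟨i, hi1, hi2, rfl⟩ | rfl | rfl
      · have : (i:ℝ) ≤ (m:ℝ)+2 := by exact_mod_cast hi2
        push_cast
        nlinarith
      · push_cast; nlinarith
      · push_cast; nlinarith
  have ev3 : γ.inf' h (fun a => (((m+3:ℕ):ℝ)+1 - a)^2) = 4/9 := by
    refine le_antisymm ?_ ?_
    · calc γ.inf' h _ ≤ (((m+3:ℕ):ℝ)+1 - (((m:ℝ)+4) - 2/3))^2 := Finset.inf'_le _ hc1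
        _ = 4/9 := by push_cast; ring_nf
    · apply Finset.le_inf' h
      intro b hb
      rcases hmem b hb with ⟨i, hi1, hi2, rfl⟩ | rfl | rfl
      · have : (i:ℝ) ≤ (m:ℝ)+2 := by exact_mod_cast hi2
        push_cast
        nlinarith
      · push_cast; nlinarith
      · push_cast; nlinarith
  have ev4 : ∀ j : ℕ, γ.inf' h (fun a => ((↑(j+(m+4)) + 1 : ℝ) - a)^2) = ((j+1:ℝ) - 2)^2 := by
    intro j
    refine le_antisymm ?_ ?_
    · calc γ.inf' h _ ≤ ((↑(j+(m+4)) + 1 : ℝ) - (((m:ℝ)+4) + 2))^2 := Finset.inf'_le _ hc2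
        _ = ((j+1:ℝ) - 2)^2 := by push_cast; ring_nf
    · apply Finset.le_inf' h
      intro b hb
      rcases hmem b hb with ⟨i, hi1, hi2, rfl⟩ | rfl | rfl
      · have : (i:ℝ) ≤ (m:ℝ)+2 := by exact_mod_cast hi2
        have hj : (0:ℝ) ≤ (j:ℝ) := Nat.cast_nonneg j
        push_cast
        nlinarith
      · have hj : (0:ℝ) ≤ (j:ℝ) := Nat.cast_nonneg j
        push_cast
        nlinarith
      · exact le_of_eq (by push_cast; ring)
  -- assemble
  rw [errG]
  rw [← (errG_summable γ h).sum_add_tsum_nat_add (m+4)]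
  have hhead : ∑ j ∈ range (m+4), (1/2^(j+1) : ℝ) * γ.inf' h (fun a => ((j+1 : ℝ) - a)^2)
      = (1/2^(m+3) : ℝ) * (1/9) + (1/2^(m+4) : ℝ) * (4/9) := by
    rw [show m+4 = (m+2)+1+1 by omega]
    rw [Finset.sum_range_succ, Finset.sum_range_succ]
    have hz : ∑ j ∈ range (m+2), (1/2^(j+1) : ℝ) * γ.inf' h (fun a => ((j+1 : ℝ) - a)^2)
        = 0 := by
      apply Finset.sum_eq_zero
      intro j hj
      have hj' := Finset.mem_range.1 hj
      rw [ev1 j (by omega : j ≤ m+1)]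
      ring
    rw [hz]
    rw [show (m+2)+1 = m+3 by omega]
    have e2 : γ.inf' h (fun a => ((↑(m+2):ℝ)+1 - a)^2) = 1/9 := ev2
    have e3 : γ.inf' h (fun a => ((↑(m+3):ℝ)+1 - a)^2) = 4/9 := ev3
    rw [e2, e3]
    rw [show m+3+1 = m+4 by omega]
    ring
  have htail : ∑' j : ℕ, (1/2^((j+(m+4))+1) : ℝ)
      * γ.inf' h (fun a => ((↑(j+(m+4)) + 1 : ℝ) - a)^2) = (1/2^(m+4) : ℝ) * 2 := by
    have hfun : ∀ j : ℕ, (1/2^((j+(m+4))+1) : ℝ)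
        * γ.inf' h (fun a => ((↑(j+(m+4)) + 1 : ℝ) - a)^2)
        = (1/2^(m+4) : ℝ) * ((1/2^(j+1) : ℝ) * ((j+1:ℝ) - 2)^2) := by
      intro j
      rw [ev4 j]
      rw [show (j+(m+4))+1 = (m+4) + (j+1) by omega, pow_add]
      ring
    rw [tsum_congr hfun, tsum_mul_left, (hasSum_err_single 2).tsum_eq]
    norm_num
  rw [hhead, htail]
  rw [show m+4 = (m+3)+1 by omega]
  simp only [pow_succ]
  ring_nf
  norm_num

lemma errG_congr {α β : Finset ℝ} (e : α = β) (h : α.Nonempty) (h' : β.Nonempty) :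
    errG α h = errG β h' := by subst e; rfl

theorem stmt15 (n : ℕ) (hn : 4 ≤ n) :
    avG (n-1) n = (n : ℝ) - 2/3 ∧
    avGTail (n+1) = (n : ℝ) + 2 ∧
    sInf {v : ℝ | ∃ (α : Finset ℝ) (h : α.Nonempty), α.card ≤ n ∧ v = errG α h}
      = (2 : ℝ)^(3 - (n : ℤ)) / 3 ∧
    errG ((Finset.Icc 1 (n-2)).image (fun j : ℕ => (j : ℝ)) ∪ {avG (n-1) n, avGTail (n+1)})
        (by simp) = (2 : ℝ)^(3 - (n : ℤ)) / 3 := by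
  have h1 : avG (n-1) n = (n : ℝ) - 2/3 := avG_eq n hn
  have h2 : avGTail (n+1) = (n : ℝ) + 2 := by
    rw [avGTail_eq (n+1) (by omega)]
    push_cast
    ring
  have hval : (2 : ℝ)^(3 - (n : ℤ)) / 3 = 8/3*(1/2)^n := by
    have h2n : ((2:ℝ)^n) ≠ 0 := by positivity
    rw [zpow_sub₀ (by norm_num : (2:ℝ) ≠ 0), zpow_natCast]
    have hh : ((1:ℝ)/2)^n = 1/2^n := by rw [div_pow, one_pow]
    rw [hh]
    norm_num
    ring
  refine ⟨h1, h2, ?_, ?_⟩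
  · -- sInf
    obtain ⟨m, rfl⟩ : ∃ m, n = m + 4 := ⟨n-4, by omega⟩
    set γ : Finset ℝ := (Finset.Icc 1 (m+2)).image (fun j : ℕ => (j : ℝ))
        ∪ {((m:ℝ)+4) - 2/3, ((m:ℝ)+4) + 2} with hγdef
    have hγne : γ.Nonempty :=
      ⟨((m:ℝ)+4) + 2, Finset.mem_union_right _ (Finset.mem_insert_of_mem
        (Finset.mem_singleton_self _))⟩
    have hγcard : γ.card ≤ m + 4 := by
      calc γ.card ≤ ((Finset.Icc 1 (m+2)).image (fun j : ℕ => (j : ℝ))).card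
            + ({((m:ℝ)+4) - 2/3, ((m:ℝ)+4) + 2} : Finset ℝ).card := Finset.card_union_le _ _
        _ ≤ (m+2) + 2 := by
            apply add_le_add
            · calc ((Finset.Icc 1 (m+2)).image (fun j : ℕ => (j : ℝ))).card
                  ≤ (Finset.Icc 1 (m+2)).card := Finset.card_image_le
                _ = m + 2 := by rw [Nat.card_Icc]; omega
            · apply le_trans (Finset.card_insert_le _ _)
              simp
        _ = m + 4 := by omega
    have hBdn : Bd (m+4) = 8/3*(1/2:ℝ)^(m+4) := by
      rw [Bd]
      rw [if_neg (by omega)]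
    have hlow : ∀ v ∈ {v : ℝ | ∃ (α : Finset ℝ) (h : α.Nonempty),
        α.card ≤ m + 4 ∧ v = errG α h}, 8/3*(1/2:ℝ)^(m+4) ≤ v := by
      rintro v ⟨α, hα, hcard, rfl⟩
      have := main_lb (m+3) α hα (by omega)
      rw [show m+3+1 = m+4 by omega] at this
      rw [hBdn] at this
      exact this
    have hmem : 8/3*(1/2:ℝ)^(m+4) ∈ {v : ℝ | ∃ (α : Finset ℝ) (h : α.Nonempty),
        α.card ≤ m + 4 ∧ v = errG α h} :=
      ⟨γ, hγne, hγcard, (errG_gamma m hγne).symm⟩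
    rw [hval]
    exact le_antisymm (csInf_le ⟨_, hlow⟩ hmem) (le_csInf ⟨_, hmem⟩ hlow)
  · -- explicit value
    rw [hval]
    obtain ⟨m, rfl⟩ : ∃ m, n = m + 4 := ⟨n-4, by omega⟩
    have hset : (Finset.Icc 1 (m+4-2)).image (fun j : ℕ => (j : ℝ))
        ∪ {avG (m+4-1) (m+4), avGTail (m+4+1)}
        = (Finset.Icc 1 (m+2)).image (fun j : ℕ => (j : ℝ))
          ∪ {((m:ℝ)+4) - 2/3, ((m:ℝ)+4) + 2} := by
      rw [show m+4-2 = m+2 by omega, h1, h2]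
      push_cast
      norm_num
    have hγne' : ((Finset.Icc 1 (m+2)).image (fun j : ℕ => (j : ℝ))
        ∪ {((m:ℝ)+4) - 2/3, ((m:ℝ)+4) + 2}).Nonempty :=
      ⟨((m:ℝ)+4) + 2, Finset.mem_union_right _ (Finset.mem_insert_of_mem
        (Finset.mem_singleton_self _))⟩
    rw [errG_congr hset _ hγne', errG_gamma m hγne']
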